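/- If V is a 𝔅-module of the intermediate series, then L(α,i)·V = 0 for all α ∈ ℤ and all i ≥ 1; that is, the subalgebra 𝔅_[1] = span{L(α,i) : α ∈ ℤ, i ≥ 1} acts trivially, so V is simply a module of the intermediate series over the Virasoro subalgebra span{L(α,0) : α ∈ ℤ} ⊕ ℂC of 𝔅. -/

import Mathlib

/-- The Lie algebra `𝔅` of Block type: a complex Lie algebra `B` equipped with a basis
`{L α i : α ∈ ℤ, i ∈ ℕ} ∪ {C}` where `C` is central and
`[L α i, L β j] = ((i+1)β − (j+1)α)·L (α+β) (i+j) + δ_{α+β,0}·δ_{i+j,0}·((α³−α)/6)·C`. -/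
structure BlockData (B : Type) [LieRing B] [LieAlgebra ℂ B] where
  L : ℤ → ℕ → B
  C : B
  central : ∀ x : B, ⁅C, x⁆ = 0
  bracket_L : ∀ (α β : ℤ) (i j : ℕ),
    ⁅L α i, L β j⁆
      = (((i : ℂ) + 1) * (β : ℂ) - ((j : ℂ) + 1) * (α : ℂ)) • L (α + β) (i + j)
        + (if α + β = 0 ∧ i + j = 0 then ((α : ℂ) ^ 3 - (α : ℂ)) / 6 else 0) • C
  indep : LinearIndependent ℂ (Sum.elim (fun p : ℤ × ℕ => L p.1 p.2) (fun _ : Unit => C))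
  span_top : Submodule.span ℂ
      (Set.range (Sum.elim (fun p : ℤ × ℕ => L p.1 p.2) (fun _ : Unit => C))) = ⊤

variable {B : Type} [LieRing B] [LieAlgebra ℂ B]
variable {V : Type} [AddCommGroup V] [Module ℂ V] [LieRingModule B V] [LieModule ℂ B V]

/-- A `ℤ`-grading `V = ⊕ₖ Vₖ` on a `𝔅`-module, compatible with the grading of `𝔅`:
`𝔅^(α)·Vₖ ⊆ V_{α+k}` (where `𝔅^(α) = span{L α i : i ≥ 0} ⊕ δ_{α,0} ℂ C`). -/
structure GradedBMod (𝔟 : BlockData B) (V : Type) [AddCommGroup V] [Module ℂ V]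
    [LieRingModule B V] [LieModule ℂ B V] where
  piece : ℤ → Submodule ℂ V
  isInternal : DirectSum.IsInternal piece
  lie_L_mem : ∀ (α : ℤ) (i : ℕ) (k : ℤ) (v : V), v ∈ piece k → ⁅𝔟.L α i, v⁆ ∈ piece (α + k)
  lie_C_mem : ∀ (k : ℤ) (v : V), v ∈ piece k → ⁅𝔟.C, v⁆ ∈ piece k

/-- A Lie submodule is graded if it is the (direct) sum of its intersections with the
graded pieces. -/
def GradedBMod.IsGradedSubmodule {𝔟 : BlockData B} (gr : GradedBMod 𝔟 V)
    (W : LieSubmodule ℂ B V) : Prop :=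
  (W : Submodule ℂ V) = ⨆ k : ℤ, (W : Submodule ℂ V) ⊓ gr.piece k

/-- A graded module is (graded-)irreducible if it is nonzero and has no graded submodule
other than `0` and `V`. -/
def GradedBMod.Irreducible {𝔟 : BlockData B} (gr : GradedBMod 𝔟 V) : Prop :=
  (∃ v : V, v ≠ 0) ∧
    ∀ W : LieSubmodule ℂ B V, gr.IsGradedSubmodule W → W = ⊥ ∨ W = ⊤

/-- Quasifinite: all graded pieces are finite dimensional. -/
def GradedBMod.Quasifinite {𝔟 : BlockData B} (gr : GradedBMod 𝔟 V) : Prop :=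
  ∀ k : ℤ, FiniteDimensional ℂ (gr.piece k)

/-- Uniformly bounded: the dimensions of the graded pieces are uniformly bounded. -/
def GradedBMod.UniformlyBounded {𝔟 : BlockData B} (gr : GradedBMod 𝔟 V) : Prop :=
  ∃ N : ℕ, ∀ k : ℤ, Module.rank ℂ (gr.piece k) ≤ N

/-- A module of the intermediate series: all graded pieces have dimension at most one. -/
def GradedBMod.IntermediateSeries {𝔟 : BlockData B} (gr : GradedBMod 𝔟 V) : Prop :=
  ∀ k : ℤ, Module.rank ℂ (gr.piece k) ≤ 1

/-- Highest weight module: generated by a nonzero `v ∈ V₀` which is a common eigenvector of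
all `L 0 i` and of `C` and is annihilated by all `L α i` with `α > 0`. -/
def GradedBMod.IsHighestWeight {𝔟 : BlockData B} (gr : GradedBMod 𝔟 V) : Prop :=
  ∃ v : V, v ≠ 0 ∧ v ∈ gr.piece 0 ∧
    (∀ i : ℕ, ∃ c : ℂ, ⁅𝔟.L 0 i, v⁆ = c • v) ∧ (∃ c : ℂ, ⁅𝔟.C, v⁆ = c • v) ∧
    (∀ α : ℤ, 0 < α → ∀ i : ℕ, ⁅𝔟.L α i, v⁆ = 0) ∧
    LieSubmodule.lieSpan ℂ B {v} = ⊤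

/-- Lowest weight module. -/
def GradedBMod.IsLowestWeight {𝔟 : BlockData B} (gr : GradedBMod 𝔟 V) : Prop :=
  ∃ v : V, v ≠ 0 ∧ v ∈ gr.piece 0 ∧
    (∀ i : ℕ, ∃ c : ℂ, ⁅𝔟.L 0 i, v⁆ = c • v) ∧ (∃ c : ℂ, ⁅𝔟.C, v⁆ = c • v) ∧
    (∀ α : ℤ, α < 0 → ∀ i : ℕ, ⁅𝔟.L α i, v⁆ = 0) ∧
    LieSubmodule.lieSpan ℂ B {v} = ⊤

private lemma key_algebra (A₀ B₀ p q c γ : ℂ) (hγ : γ ≠ 0) (hc : c ≠ 0)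
    (E0 : A₀ - B₀ = -3*γ) (E1 : p*A₀ - q*B₀ = -6*γ*c^2)
    (E2 : p^2*A₀ - q^2*B₀ = -9*γ*c^4) (E3 : p^3*A₀ - q^3*B₀ = -12*γ*c^6) : False := by
  have h1 : γ * (3*c^4 - 2*c^2*(p+q) + p*q) = 0 := by
    linear_combination ((1:ℂ)/3) * (E2 - (p+q)*E1 + p*q*E0)
  have h2 : γ * (4*c^6 - 3*c^4*(p+q) + 2*c^2*(p*q)) = 0 := by
    linear_combination ((1:ℂ)/3) * (E3 - (p+q)*E2 + p*q*E1)
  have hr1 : 3*c^4 - 2*c^2*(p+q) + p*q = 0 := by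
    rcases mul_eq_zero.mp h1 with h | h
    · exact absurd h hγ
    · exact h
  have hr2 : 4*c^6 - 3*c^4*(p+q) + 2*c^2*(p*q) = 0 := by
    rcases mul_eq_zero.mp h2 with h | h
    · exact absurd h hγ
    · exact h
  have h3 : c^4 * (p + q - 2*c^2) = 0 := by linear_combination (-2)*c^2*hr1 + hr2
  have hsum : p + q = 2*c^2 := by
    rcases mul_eq_zero.mp h3 with h | h
    · exact absurd h (pow_ne_zero _ hc)
    · linear_combination h
  have hprod : p * q = c^4 := by linear_combination hr1 + 2*c^2*hsum
  have hd : (p - c^2)^2 = 0 := by linear_combination (-1)*hprod + p*hsum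
  have hp : p = c^2 := by
    have := pow_eq_zero_iff (n := 2) (by norm_num) |>.mp hd
    linear_combination this
  have hq : q = c^2 := by linear_combination hsum - hp
  have hfin : (3:ℂ)*γ*c^2 = 0 := by linear_combination E1 - c^2*E0 - A₀*hp + B₀*hq
  rcases mul_eq_zero.mp hfin with h | h
  · rcases mul_eq_zero.mp h with h' | h'
    · norm_num at h'
    · exact hγ h'
  · exact hc (pow_eq_zero_iff (by norm_num) |>.mp h)


/-- If `V` is a `𝔅`-module of the intermediate series, then `L(α,i)·V = 0` for
all `α ∈ ℤ` and all `i ≥ 1`; that is, the subalgebra `𝔅_[1] = span{L(α,i) : i ≥ 1}` acts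
trivially, so `V` is simply a module of the intermediate series over the Virasoro subalgebra
`span{L(α,0) : α ∈ ℤ} ⊕ ℂC` of `𝔅`. -/
theorem block_intermediate_series_is_virasoro_module
    (𝔟 : BlockData B) (gr : GradedBMod 𝔟 V) (hint : gr.IntermediateSeries) :
    ∀ (α : ℤ) (i : ℕ), 1 ≤ i → ∀ v : V, ⁅𝔟.L α i, v⁆ = 0 := by
  classical
  -- the scalar by which `L 0 1` acts on each piece
  have hμex : ∀ k : ℤ, ∃ m : ℂ, ∀ v ∈ gr.piece k, ⁅𝔟.L 0 1, v⁆ = m • v := by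
    intro k
    obtain ⟨v₀, h0⟩ := rank_le_one_iff.mp (hint k)
    have hmem : ⁅𝔟.L 0 1, (v₀ : V)⁆ ∈ gr.piece k := by
      have := gr.lie_L_mem 0 1 k v₀ v₀.2
      rwa [zero_add] at this
    obtain ⟨m, hm⟩ := h0 ⟨_, hmem⟩
    have hm' : m • (v₀ : V) = ⁅𝔟.L 0 1, (v₀ : V)⁆ := by
      simpa using congrArg Subtype.val hm
    refine ⟨m, fun v hv => ?_⟩
    obtain ⟨s, hs⟩ := h0 ⟨v, hv⟩
    have hs' : s • (v₀ : V) = v := by simpa using congrArg Subtype.val hs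
    rw [← hs', lie_smul, ← hm']
    exact smul_comm s m _
  choose μ hμ using hμex
  -- any two members of a piece are proportional
  have hscal : ∀ (m : ℤ) (x y : V), x ∈ gr.piece m → y ∈ gr.piece m → x ≠ 0 →
      ∃ t : ℂ, y = t • x := by
    intro m x y hx hy hxne
    obtain ⟨v₀, h0⟩ := rank_le_one_iff.mp (hint m)
    obtain ⟨s, hs⟩ := h0 ⟨x, hx⟩
    obtain ⟨t, ht⟩ := h0 ⟨y, hy⟩
    have hs' : s • (v₀ : V) = x := by simpa using congrArg Subtype.val hs
    have ht' : t • (v₀ : V) = y := by simpa using congrArg Subtype.val ht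
    have hsne : s ≠ 0 := by
      rintro rfl
      rw [zero_smul] at hs'
      exact hxne hs'.symm
    refine ⟨t / s, ?_⟩
    rw [← ht', ← hs', smul_smul]
    congr 1
    field_simp
  -- the basic recursion in `i`
  have step : ∀ (γ k : ℤ), γ ≠ 0 → ∀ v ∈ gr.piece k, ∀ i : ℕ,
      ⁅𝔟.L γ (i+1), v⁆ = ((μ (γ+k) - μ k) / (2*(γ:ℂ))) • ⁅𝔟.L γ i, v⁆ := by
    intro γ k hγ v hv i
    have hγC : (γ : ℂ) ≠ 0 := Int.cast_ne_zero.mpr hγ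
    have hb := 𝔟.bracket_L γ 0 i 1
    rw [if_neg (by simp)] at hb
    have h := congrArg (fun x => ⁅x, v⁆) hb
    simp only [add_lie, smul_lie, zero_smul, add_zero, lie_lie] at h
    rw [hμ k v hv, lie_smul, hμ (γ+k) _ (gr.lie_L_mem γ i k v hv)] at h
    rw [← sub_smul] at h
    have hZ : ((i : ℂ) + 1) * ((0:ℤ) : ℂ) - (((1:ℕ) : ℂ) + 1) * (γ : ℂ) = -(2*(γ:ℂ)) := by
      push_cast; ring
    rw [hZ] at h
    have hne : (-(2*(γ:ℂ))) ≠ 0 := neg_ne_zero.mpr (mul_ne_zero two_ne_zero hγC)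
    have h4 : ⁅𝔟.L γ (i+1), v⁆
        = (-(2*(γ:ℂ)))⁻¹ • ((μ k - μ (γ+k)) • ⁅𝔟.L γ i, v⁆) := by
      rw [h, inv_smul_smul₀ hne]
    rw [h4, smul_smul]
    congr 1
    field_simp
    ring
  -- powers
  have pow_rel : ∀ (γ k : ℤ), γ ≠ 0 → ∀ v ∈ gr.piece k, ∀ i : ℕ,
      ⁅𝔟.L γ i, v⁆ = (((μ (γ+k) - μ k) / (2*(γ:ℂ)))^i) • ⁅𝔟.L γ 0, v⁆ := by
    intro γ k hγ v hv i
    induction i with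
    | zero => simp
    | succ n ih =>
      rw [step γ k hγ v hv n, ih, smul_smul]
      congr 1
      ring
  -- master identity
  have master : ∀ (α β k : ℤ), α ≠ 0 → β ≠ 0 → α + β ≠ 0 → ∀ v ∈ gr.piece k, ∀ n : ℕ,
      ((((μ (β+k) - μ k) / (2*(β:ℂ)))^n * ((μ (α+(β+k)) - μ (β+k)) / (2*(α:ℂ)))^n)
          • ⁅𝔟.L α 0, ⁅𝔟.L β 0, v⁆⁆)
        - ((((μ (α+k) - μ k) / (2*(α:ℂ)))^n * ((μ (β+(α+k)) - μ (α+k)) / (2*(β:ℂ)))^n)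
          • ⁅𝔟.L β 0, ⁅𝔟.L α 0, v⁆⁆)
      = ((((n:ℂ) + 1) * (β : ℂ) - ((n:ℂ) + 1) * (α : ℂ))
          * (((μ ((α+β)+k) - μ k) / (2*((α+β : ℤ):ℂ)))^(n+n))) • ⁅𝔟.L (α+β) 0, v⁆ := by
    intro α β k hα hβ hαβ v hv n
    have hb := 𝔟.bracket_L α β n n
    rw [if_neg (fun hcon => hαβ hcon.1)] at hb
    have h := congrArg (fun x => ⁅x, v⁆) hb
    simp only [add_lie, smul_lie, zero_smul, add_zero, lie_lie] at h
    rw [pow_rel β k hβ v hv n, lie_smul,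
        pow_rel α (β+k) hα _ (gr.lie_L_mem β 0 k v hv) n,
        pow_rel α k hα v hv n, lie_smul,
        pow_rel β (α+k) hβ _ (gr.lie_L_mem α 0 k v hv) n,
        pow_rel (α+β) k hαβ v hv (n+n)] at h
    simpa only [smul_smul] using h
  -- vanishing of `L γ 1` for `γ ≠ 0` on homogeneous vectors
  have claim1 : ∀ (γ k : ℤ), γ ≠ 0 → ∀ v ∈ gr.piece k, ⁅𝔟.L γ 1, v⁆ = 0 := by
    intro γ k hγ v hv
    have hγC : (γ : ℂ) ≠ 0 := Int.cast_ne_zero.mpr hγ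
    have h1 := pow_rel γ k hγ v hv 1
    by_cases hw : ⁅𝔟.L γ 0, v⁆ = 0
    · rw [h1, hw, smul_zero]
    suffices hc : (μ (γ+k) - μ k) / (2*(γ:ℂ)) = 0 by
      rw [h1, hc]; simp
    by_contra hc
    have hα2 : (2*γ : ℤ) ≠ 0 := mul_ne_zero two_ne_zero hγ
    have hβ2 : (-γ : ℤ) ≠ 0 := neg_ne_zero.mpr hγ
    have hsum2 : (2*γ) + (-γ) = γ := by ring
    have hM := master (2*γ) (-γ) k hα2 hβ2 (by rw [hsum2]; exact hγ) v hv
    rw [hsum2] at hM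
    have hA : ⁅𝔟.L (2*γ) 0, ⁅𝔟.L (-γ) 0, v⁆⁆ ∈ gr.piece (γ + k) := by
      have := gr.lie_L_mem (2*γ) 0 _ _ (gr.lie_L_mem (-γ) 0 k v hv)
      rwa [show (2*γ) + (-γ + k) = γ + k by ring] at this
    have hB : ⁅𝔟.L (-γ) 0, ⁅𝔟.L (2*γ) 0, v⁆⁆ ∈ gr.piece (γ + k) := by
      have := gr.lie_L_mem (-γ) 0 _ _ (gr.lie_L_mem (2*γ) 0 k v hv)
      rwa [show (-γ) + (2*γ + k) = γ + k by ring] at this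
    have hwmem : ⁅𝔟.L γ 0, v⁆ ∈ gr.piece (γ + k) := gr.lie_L_mem γ 0 k v hv
    obtain ⟨A₀, hA₀⟩ := hscal (γ+k) _ _ hwmem hA hw
    obtain ⟨B₀, hB₀⟩ := hscal (γ+k) _ _ hwmem hB hw
    have toScalar : ∀ (X Y Z : ℂ),
        X • ⁅𝔟.L (2*γ) 0, ⁅𝔟.L (-γ) 0, v⁆⁆ - Y • ⁅𝔟.L (-γ) 0, ⁅𝔟.L (2*γ) 0, v⁆⁆
          = Z • ⁅𝔟.L γ 0, v⁆ → X*A₀ - Y*B₀ = Z := by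
      intro X Y Z hXYZ
      rw [hA₀, hB₀, smul_smul, smul_smul, ← sub_smul] at hXYZ
      have h0 : (X*A₀ - Y*B₀ - Z) • ⁅𝔟.L γ 0, v⁆ = 0 := by
        rw [sub_smul, hXYZ, sub_self]
      rcases smul_eq_zero.mp h0 with h | h
      · exact sub_eq_zero.mp h
      · exact absurd h hw
    have E0 := toScalar _ _ _ (hM 0)
    have E1 := toScalar _ _ _ (hM 1)
    have E2 := toScalar _ _ _ (hM 2)
    have E3 := toScalar _ _ _ (hM 3)
    set a : ℂ := (μ (2*γ + (-γ+k)) - μ (-γ+k)) / (2*((2*γ:ℤ):ℂ)) with ha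
    set b : ℂ := (μ (-γ+k) - μ k) / (2*((-γ:ℤ):ℂ)) with hbdef
    set a' : ℂ := (μ (2*γ+k) - μ k) / (2*((2*γ:ℤ):ℂ)) with ha'
    set b' : ℂ := (μ (-γ+(2*γ+k)) - μ (2*γ+k)) / (2*((-γ:ℤ):ℂ)) with hb'
    set c : ℂ := (μ (γ+k) - μ k) / (2*(γ:ℂ)) with hcdef
    refine key_algebra A₀ B₀ (b*a) (a'*b') c (γ:ℂ) hγC hc ?_ ?_ ?_ ?_
    · push_cast at E0 ⊢; linear_combination E0
    · push_cast at E1 ⊢; linear_combination E1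
    · push_cast at E2 ⊢; linear_combination E2
    · push_cast at E3 ⊢; linear_combination E3
  -- vanishing of `L 0 1`
  have claim0 : ∀ (k : ℤ), ∀ v ∈ gr.piece k, ⁅𝔟.L 0 1, v⁆ = 0 := by
    intro k v hv
    have hb := 𝔟.bracket_L 1 (-1) 1 0
    rw [if_neg (by norm_num)] at hb
    have h := congrArg (fun x => ⁅x, v⁆) hb
    simp only [add_lie, smul_lie, zero_smul, add_zero, lie_lie] at h
    rw [claim1 1 (-1 + k) one_ne_zero _ (gr.lie_L_mem (-1) 0 k v hv)] at h
    rw [claim1 1 k one_ne_zero v hv, lie_zero, sub_zero] at h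
    rw [show (1:ℤ) + -1 = 0 by norm_num] at h
    have hco : (((1:ℕ) : ℂ) + 1) * ((-1:ℤ) : ℂ) - (((0:ℕ) : ℂ) + 1) * ((1:ℤ) : ℂ) ≠ 0 := by
      push_cast; norm_num
    have h' := (smul_eq_zero.mp h.symm).resolve_left hco
    exact h'
  -- all `L α 1` vanish on homogeneous vectors
  have homog1 : ∀ (α k : ℤ), ∀ v ∈ gr.piece k, ⁅𝔟.L α 1, v⁆ = 0 := by
    intro α k v hv
    rcases eq_or_ne α 0 with rfl | hα
    · exact claim0 k v hv
    · exact claim1 α k hα v hv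
  -- all `L α i`, `i ≥ 1`, vanish on homogeneous vectors
  have homogAll : ∀ (α : ℤ) (i : ℕ), 1 ≤ i → ∀ (k : ℤ), ∀ v ∈ gr.piece k,
      ⁅𝔟.L α i, v⁆ = 0 := by
    intro α i hi k v hv
    obtain ⟨m, rfl⟩ : ∃ m, i = m + 1 := ⟨i - 1, by omega⟩
    rcases Nat.eq_zero_or_pos m with rfl | hm
    · exact homog1 α k v hv
    obtain ⟨n, rfl⟩ : ∃ n, m = n + 1 := ⟨m - 1, by omega⟩
    rcases eq_or_ne α 0 with rfl | hα
    · -- use `[L (-1) (n+1), L 1 1]`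
      have hb := 𝔟.bracket_L (-1) 1 (n+1) 1
      rw [if_neg (by simp)] at hb
      have h := congrArg (fun x => ⁅x, v⁆) hb
      simp only [add_lie, smul_lie, zero_smul, add_zero, lie_lie] at h
      rw [homog1 1 k v hv, lie_zero,
          homog1 1 ((-1) + k) _ (gr.lie_L_mem (-1) (n+1) k v hv), sub_zero] at h
      rw [show (-1:ℤ) + 1 = 0 by norm_num] at h
      have hco : (((n+1:ℕ) : ℂ) + 1) * ((1:ℤ) : ℂ) - (((1:ℕ) : ℂ) + 1) * ((-1:ℤ) : ℂ) ≠ 0 := by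
        have h4 : ((n : ℂ) + 4) ≠ 0 := by
          have : (((n+4:ℕ)) : ℂ) ≠ 0 := Nat.cast_ne_zero.mpr (by omega)
          push_cast at this
          exact this
        push_cast
        intro hcon
        exact h4 (by linear_combination hcon)
      exact (smul_eq_zero.mp h.symm).resolve_left hco
    · -- use `[L α (n+1), L 0 1]`
      have hb := 𝔟.bracket_L α 0 (n+1) 1
      rw [if_neg (by simp)] at hb
      have h := congrArg (fun x => ⁅x, v⁆) hb
      simp only [add_lie, smul_lie, zero_smul, add_zero, lie_lie] at h
      rw [claim0 k v hv, lie_zero,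
          claim0 (α + k) _ (gr.lie_L_mem α (n+1) k v hv), sub_zero] at h
      have hco : (((n+1:ℕ) : ℂ) + 1) * ((0:ℤ) : ℂ) - (((1:ℕ) : ℂ) + 1) * ((α:ℤ) : ℂ) ≠ 0 := by
        have hγC : (α : ℂ) ≠ 0 := Int.cast_ne_zero.mpr hα
        push_cast
        intro hcon
        exact hγC (by linear_combination (-(1:ℂ)/2) * hcon)
      exact (smul_eq_zero.mp h.symm).resolve_left hco
  -- extend to all of `V`
  intro α i hi v
  have hv : v ∈ ⨆ k, gr.piece k := by
    rw [gr.isInternal.submodule_iSup_eq_top]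
    exact Submodule.mem_top
  exact Submodule.iSup_induction (motive := fun x => ⁅𝔟.L α i, x⁆ = 0) gr.piece hv
    (fun k x hx => homogAll α i hi k x hx) (lie_zero _)
    (fun x y hx hy => by
      show ⁅𝔟.L α i, x + y⁆ = 0
      rw [lie_add, show ⁅𝔟.L α i, x⁆ = 0 from hx, show ⁅𝔟.L α i, y⁆ = 0 from hy, add_zero])
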